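/- Suppose the measurement operator satisfies (2r, δ)-RIP, X* = U*·U*ᵀ for some U* ∈ ℝ^{n×r}, n ≥ 2, σ_w ≥ 0, and the noise vector w ∈ ℝ^m satisfies: |Σ_{i=1}^m w_i·⟨A_i, M⟩| ≤ 2·σ_w·√(log n)·(Σ_{i=1}^m ⟨A_i, M⟩²)^{1/2} for every M ∈ ℝ^{n×n} with rank(M) ≤ 2r. Let U ∈ ℝ^{n×r} satisfy the noisy first-order stationarity equation Σ_{i=1}^m (⟨A_i, U·Uᵀ − X*⟩ − w_i)·A_i·U = 0, and let P be the orthogonal projection onto the column space of U. Then ‖(U·Uᵀ − X*)·P‖_F ≤ δ·‖U·Uᵀ − X*‖_F + 2·√((1+δ)·log(n)/m)·σ_w. -/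

import Mathlib

open Matrix MeasureTheory BigOperators

/-- Matrix inner product `⟨A, X⟩ = trace(Aᵀ X)`. -/
noncomputable def mip {n : ℕ} (A X : Matrix (Fin n) (Fin n) ℝ) : ℝ :=
  (Aᵀ * X).trace

/-- Frobenius norm of a real matrix. -/
noncomputable def frob {n₁ n₂ : ℕ} (M : Matrix (Fin n₁) (Fin n₂) ℝ) : ℝ :=
  Real.sqrt (∑ i, ∑ j, (M i j) ^ 2)

/-- `(k, δ)`-restricted isometry property of the measurement operator `A`. -/
def RIP {n m : ℕ} (A : Fin m → Matrix (Fin n) (Fin n) ℝ) (k : ℕ) (δ : ℝ) : Prop :=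
  ∀ X : Matrix (Fin n) (Fin n) ℝ, X.rank ≤ k →
    (1 - δ) * frob X ^ 2 ≤ (1 / (m : ℝ)) * ∑ i, mip (A i) X ^ 2 ∧
    (1 / (m : ℝ)) * ∑ i, mip (A i) X ^ 2 ≤ (1 + δ) * frob X ^ 2

/-- Objective `f(U) = ∑ i, (⟨A i, U Uᵀ⟩ - y i)²`. -/
noncomputable def fobj {n m r : ℕ} (A : Fin m → Matrix (Fin n) (Fin n) ℝ) (y : Fin m → ℝ)
    (U : Matrix (Fin n) (Fin r) ℝ) : ℝ :=
  ∑ i, (mip (A i) (U * Uᵀ) - y i) ^ 2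

set_option maxHeartbeats 1000000
section NFOCHelpers
variable {n : ℕ}

lemma mip_comm (A X : Matrix (Fin n) (Fin n) ℝ) : mip A X = mip X A := by
  rw [mip, ← Matrix.trace_transpose, Matrix.transpose_mul, Matrix.transpose_transpose, mip]

lemma mip_add_right (A X Y : Matrix (Fin n) (Fin n) ℝ) : mip A (X + Y) = mip A X + mip A Y := by
  simp [mip, Matrix.mul_add]

lemma mip_smul_right (A X : Matrix (Fin n) (Fin n) ℝ) (c : ℝ) : mip A (c • X) = c * mip A X := by
  simp [mip, Matrix.mul_smul]

lemma mip_add_left (A B X : Matrix (Fin n) (Fin n) ℝ) : mip (A + B) X = mip A X + mip B X := by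
  simp [mip, Matrix.transpose_add, Matrix.add_mul]

lemma mip_smul_left (A X : Matrix (Fin n) (Fin n) ℝ) (c : ℝ) : mip (c • A) X = c * mip A X := by
  simp [mip, Matrix.transpose_smul, Matrix.smul_mul]

lemma frob_nonneg {n₁ n₂ : ℕ} (M : Matrix (Fin n₁) (Fin n₂) ℝ) : 0 ≤ frob M :=
  Real.sqrt_nonneg _

lemma mip_self (X : Matrix (Fin n) (Fin n) ℝ) : mip X X = frob X ^ 2 := by
  rw [frob, Real.sq_sqrt (by positivity)]
  simp only [mip, Matrix.trace, Matrix.mul_apply, Matrix.diag, Matrix.transpose_apply, sq]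
  exact Finset.sum_comm

lemma frob_eq_zero {X : Matrix (Fin n) (Fin n) ℝ} (h : frob X = 0) : X = 0 := by
  have h2 : ∑ i, ∑ j, (X i j) ^ 2 = 0 := by
    have h' := congrArg (· ^ 2) h
    simp only [frob] at h'
    rwa [Real.sq_sqrt (by positivity), zero_pow (by norm_num)] at h'
  ext i j
  have hi := (Finset.sum_eq_zero_iff_of_nonneg (fun i _ => by positivity)).mp h2 i (Finset.mem_univ i)
  have hj := (Finset.sum_eq_zero_iff_of_nonneg (fun j _ => by positivity)).mp hi j (Finset.mem_univ j)
  simpa using pow_eq_zero_iff (n := 2) (by norm_num) |>.mp hj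

lemma mip_expand (E F : Matrix (Fin n) (Fin n) ℝ) (a b : ℝ) :
    mip (b • E + a • F) (b • E + a • F)
      = b ^ 2 * mip E E + 2 * a * b * mip E F + a ^ 2 * mip F F := by
  simp only [mip_add_left, mip_add_right, mip_smul_left, mip_smul_right, mip_comm F E]
  ring

lemma rank_add_le' (A B : Matrix (Fin n) (Fin n) ℝ) : (A + B).rank ≤ A.rank + B.rank := by
  have hle : LinearMap.range (A + B).mulVecLin ≤
      LinearMap.range A.mulVecLin ⊔ LinearMap.range B.mulVecLin := by
    rintro x ⟨v, rfl⟩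
    rw [Matrix.mulVecLin_add]
    exact Submodule.add_mem_sup ⟨v, rfl⟩ ⟨v, rfl⟩
  calc (A + B).rank
      ≤ Module.finrank ℝ ↥(LinearMap.range A.mulVecLin ⊔ LinearMap.range B.mulVecLin) :=
        Submodule.finrank_mono hle
    _ ≤ A.rank + B.rank := Submodule.finrank_add_le_finrank_add_finrank _ _

lemma rank_neg' (B : Matrix (Fin n) (Fin n) ℝ) : (-B).rank = B.rank := by
  have hra : LinearMap.range (-B).mulVecLin = LinearMap.range B.mulVecLin := by
    apply le_antisymm <;> rintro x ⟨v, rfl⟩ <;>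
      exact ⟨-v, by simp [Matrix.mulVecLin_apply, Matrix.neg_mulVec, Matrix.mulVec_neg]⟩
  unfold Matrix.rank
  rw [hra]

end NFOCHelpers

/-- Noisy first-order condition: the projected error at a noisy stationary point. -/
theorem noisy_first_order_condition {n m r : ℕ} (hn : 2 ≤ n) (hm : 0 < m) (hr : 0 < r)
    (A : Fin m → Matrix (Fin n) (Fin n) ℝ)
    (δ : ℝ) (hRIP : RIP A (2 * r) δ)
    (Ustar : Matrix (Fin n) (Fin r) ℝ) (Xstar : Matrix (Fin n) (Fin n) ℝ)
    (hX : Xstar = Ustar * Ustarᵀ)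
    (σw : ℝ) (hσw : 0 ≤ σw) (w : Fin m → ℝ)
    (hw : ∀ M : Matrix (Fin n) (Fin n) ℝ, M.rank ≤ 2 * r →
      |∑ i, w i * mip (A i) M| ≤
        2 * σw * Real.sqrt (Real.log n) * Real.sqrt (∑ i, mip (A i) M ^ 2))
    (U : Matrix (Fin n) (Fin r) ℝ)
    (hstat : ∑ i, (mip (A i) (U * Uᵀ - Xstar) - w i) • (A i * U) = 0)
    (P : Matrix (Fin n) (Fin n) ℝ) (hPsym : Pᵀ = P) (hPidem : P * P = P)
    (hPrange : LinearMap.range P.mulVecLin = LinearMap.range U.mulVecLin) :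
    frob ((U * Uᵀ - Xstar) * P) ≤
      δ * frob (U * Uᵀ - Xstar) + 2 * Real.sqrt ((1 + δ) * Real.log n / m) * σw := by
  have hm' : (0 : ℝ) < m := by exact_mod_cast hm
  have hm0 : (m : ℝ) ≠ 0 := ne_of_gt hm'
  have hL : 0 ≤ Real.log n := Real.log_nonneg (by exact_mod_cast Nat.one_le_of_lt hn)
  set L := Real.log n with hLdef
  clear_value L
  set E := U * Uᵀ - Xstar with hE
  -- δ ≥ 0
  have hδ : 0 ≤ δ := by
    have i0 : Fin n := ⟨0, by omega⟩
    set X₀ : Matrix (Fin n) (Fin n) ℝ :=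
      Matrix.vecMulVec (Pi.single i0 1) (Pi.single i0 1) with hX₀
    have hrk : X₀.rank ≤ 2 * r := by
      rw [hX₀, Matrix.vecMulVec_eq (Fin 1)]
      calc (Matrix.replicateCol (Fin 1) (Pi.single i0 (1:ℝ)) * Matrix.replicateRow (Fin 1) (Pi.single i0 (1:ℝ))).rank
          ≤ (Matrix.replicateCol (Fin 1) (Pi.single i0 (1:ℝ))).rank := Matrix.rank_mul_le_left _ _
        _ ≤ Fintype.card (Fin 1) := Matrix.rank_le_card_width _
        _ ≤ 2 * r := by simp; omega
    have hfr : frob X₀ ^ 2 = 1 := by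
      rw [frob, Real.sq_sqrt (by positivity)]
      simp [hX₀, Matrix.vecMulVec_apply, Pi.single_apply, mul_pow, Finset.sum_ite_eq',
        apply_ite (· ^ (2:ℕ))]
    obtain ⟨h1, h2⟩ := hRIP X₀ hrk
    rw [hfr] at h1 h2
    linarith
  -- rank of E
  have hrkE : E.rank ≤ 2 * r := by
    have h1 : (U * Uᵀ).rank ≤ r := by
      have ha := Matrix.rank_mul_le_left U Uᵀ
      have hb := Matrix.rank_le_width (R := ℝ) U
      omega
    have h2 : (Ustar * Ustarᵀ).rank ≤ r := by
      have ha := Matrix.rank_mul_le_left Ustar Ustarᵀ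
      have hb := Matrix.rank_le_width (R := ℝ) Ustar
      omega
    have : E = U * Uᵀ + -(Ustar * Ustarᵀ) := by rw [hE, hX, sub_eq_add_neg]
    calc E.rank = (U * Uᵀ + -(Ustar * Ustarᵀ)).rank := by rw [← this]
      _ ≤ (U * Uᵀ).rank + (-(Ustar * Ustarᵀ)).rank := rank_add_le' _ _
      _ = (U * Uᵀ).rank + (Ustar * Ustarᵀ).rank := by rw [rank_neg']
      _ ≤ 2 * r := by omega
  have hrkEP : (E * P).rank ≤ 2 * r := (Matrix.rank_mul_le_left _ _).trans hrkE
  -- C construction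
  have hcol : ∀ j : Fin n, ∃ v : Fin r → ℝ, U *ᵥ v = Pᵀ j := by
    intro j
    have hmem : Pᵀ j ∈ LinearMap.range P.mulVecLin :=
      ⟨Pi.single j 1, by rw [Matrix.mulVecLin_apply, Matrix.mulVec_single_one]; rfl⟩
    rw [hPrange] at hmem
    exact hmem
  choose cc hcc using hcol
  set C : Matrix (Fin r) (Fin n) ℝ := Matrix.of fun i j => cc j i with hC
  have hUC : U * C = P := by
    ext i j
    have h := congrFun (hcc j) i
    simp only [Matrix.mulVec, dotProduct, Matrix.transpose_apply] at h
    simpa [Matrix.mul_apply, hC] using h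
  have hPdecomp : P = Cᵀ * Uᵀ := by rw [← hPsym, ← hUC, Matrix.transpose_mul]
  set V := E * Cᵀ with hV
  have hEP : E * P = V * Uᵀ := by rw [hPdecomp, hV, Matrix.mul_assoc]
  -- stationarity consequence
  have h0 : ∑ i, (mip (A i) E - w i) * mip (A i) (E * P) = 0 := by
    have key : ∀ i, mip (A i) (E * P) = ((A i * U)ᵀ * V).trace := by
      intro i
      rw [hEP, mip, ← Matrix.mul_assoc, Matrix.trace_mul_comm, Matrix.transpose_mul,
        Matrix.mul_assoc]
    have hs := congrArg (fun M : Matrix (Fin n) (Fin r) ℝ => (Mᵀ * V).trace) hstat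
    simp only [Matrix.transpose_sum, Matrix.sum_mul, Matrix.trace_sum, Matrix.transpose_smul,
      Matrix.smul_mul, Matrix.trace_smul, smul_eq_mul, Matrix.zero_mul, Matrix.trace_zero,
      Matrix.transpose_zero] at hs
    calc ∑ i, (mip (A i) E - w i) * mip (A i) (E * P)
        = ∑ i, (mip (A i) E - w i) * ((A i * U)ᵀ * V).trace :=
          Finset.sum_congr rfl fun i _ => by rw [key]
      _ = 0 := hs
  -- inner product identity
  have hEPE : mip E (E * P) = mip (E * P) (E * P) := by
    have h1 : (E * P)ᵀ * (E * P) = P * (Eᵀ * (E * P)) := by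
      rw [Matrix.transpose_mul, hPsym, Matrix.mul_assoc]
    rw [mip, mip, h1]
    conv_rhs => rw [Matrix.trace_mul_comm]
    congr 1
    rw [Matrix.mul_assoc, Matrix.mul_assoc, hPidem]
  -- abbreviations
  set a := frob E with ha
  clear_value a
  set b := frob (E * P) with hb
  clear_value b
  have ha0 : 0 ≤ a := by rw [ha]; exact frob_nonneg _
  have hb0 : 0 ≤ b := by rw [hb]; exact frob_nonneg _
  set SE := ∑ i, mip (A i) E ^ 2 with hSE
  clear_value SE
  set SP := ∑ i, mip (A i) (E * P) ^ 2 with hSP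
  clear_value SP
  set T := ∑ i, mip (A i) E * mip (A i) (E * P) with hT
  clear_value T
  have hTw : T = ∑ i, w i * mip (A i) (E * P) := by
    have expand : ∑ i, (mip (A i) E - w i) * mip (A i) (E * P)
        = T - ∑ i, w i * mip (A i) (E * P) := by
      rw [hT, ← Finset.sum_sub_distrib]
      exact Finset.sum_congr rfl fun i _ => by ring
    rw [expand] at h0
    linarith
  -- trivial case b = 0
  rcases eq_or_lt_of_le hb0 with hbz | hbpos
  · rw [← hbz]
    have : 0 ≤ 2 * Real.sqrt ((1 + δ) * L / m) * σw := by positivity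
    have : 0 ≤ δ * a := mul_nonneg hδ ha0
    linarith
  have hapos : 0 < a := by
    rcases eq_or_lt_of_le ha0 with haz | h
    · exfalso
      have hE0 : E = 0 := frob_eq_zero (by rw [← ha, ← haz])
      have : E * P = 0 := by rw [hE0, Matrix.zero_mul]
      rw [hb, this] at hbpos
      simp [frob] at hbpos
    · exact h
  -- RIP expansions
  have hfact : ∀ s : ℝ, b • E + s • (E * P) = E * (b • (1 : Matrix (Fin n) (Fin n) ℝ) + s • P) := by
    intro s
    rw [Matrix.mul_add, Matrix.mul_smul, Matrix.mul_smul, Matrix.mul_one]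
  have hrkZ : ∀ s : ℝ, (b • E + s • (E * P)).rank ≤ 2 * r := by
    intro s
    rw [hfact]
    exact (Matrix.rank_mul_le_left _ _).trans hrkE
  have hsum : ∀ s : ℝ, ∑ i, mip (A i) (b • E + s • (E * P)) ^ 2
      = b ^ 2 * SE + 2 * s * b * T + s ^ 2 * SP := by
    intro s
    have hlin : ∀ i, mip (A i) (b • E + s • (E * P))
        = b * mip (A i) E + s * mip (A i) (E * P) := fun i => by
      rw [mip_add_right, mip_smul_right, mip_smul_right]
    calc ∑ i, mip (A i) (b • E + s • (E * P)) ^ 2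
        = ∑ i, (b ^ 2 * mip (A i) E ^ 2 + 2 * s * b * (mip (A i) E * mip (A i) (E * P))
            + s ^ 2 * mip (A i) (E * P) ^ 2) :=
          Finset.sum_congr rfl fun i _ => by rw [hlin i]; ring
      _ = b ^ 2 * SE + 2 * s * b * T + s ^ 2 * SP := by
          simp only [hSE, hSP, hT, Finset.mul_sum, Finset.sum_add_distrib]
  have hfrZ : ∀ s : ℝ, frob (b • E + s • (E * P)) ^ 2
      = b ^ 2 * a ^ 2 + 2 * s * b * b ^ 2 + s ^ 2 * b ^ 2 := by
    intro s
    rw [← mip_self, mip_expand, mip_self, hEPE, mip_self, ← ha, ← hb]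
  have hdiv : ∀ {x y : ℝ}, x ≤ 1 / (m:ℝ) * y → x * m ≤ y := by
    intro x y h
    rw [one_div, inv_mul_eq_div] at h
    exact (le_div_iff₀ hm').mp h
  have hdiv' : ∀ {x y : ℝ}, 1 / (m:ℝ) * y ≤ x → y ≤ x * m := by
    intro x y h
    rw [one_div, inv_mul_eq_div] at h
    exact (div_le_iff₀ hm').mp h
  obtain ⟨hp1, _⟩ := hRIP (b • E + a • (E * P)) (hrkZ a)
  obtain ⟨_, hm2⟩ := hRIP (b • E + (-a) • (E * P)) (hrkZ (-a))
  rw [hsum a, hfrZ a] at hp1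
  rw [hsum (-a), hfrZ (-a)] at hm2
  have hp1' := hdiv hp1
  have hm2' := hdiv' hm2
  -- combine to lower bound on T
  have hq : (m : ℝ) * (4 * (a * b) * b ^ 2 - 4 * δ * (a ^ 2 * b ^ 2)) ≤ 4 * (a * b) * T := by
    nlinarith [hp1', hm2']
  have hT1 : (m : ℝ) * (b ^ 2 - δ * (a * b)) ≤ T := by
    have h4 : (0 : ℝ) < 4 * (a * b) := by positivity
    have h5 : (m : ℝ) * (b ^ 2 - δ * (a * b)) * (4 * (a * b)) ≤ T * (4 * (a * b)) := by
      nlinarith [hq]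
    exact le_of_mul_le_mul_right h5 h4
  -- upper bound on T
  have hSPle : SP ≤ (m : ℝ) * ((1 + δ) * b ^ 2) := by
    obtain ⟨_, h⟩ := hRIP (E * P) hrkEP
    have h' := hdiv' h
    rw [← hSP, ← hb] at h'
    nlinarith [h']
  have hSP0 : 0 ≤ SP := by
    rw [hSP]; exact Finset.sum_nonneg fun i _ => by positivity
  have hT2 : T ≤ 2 * σw * Real.sqrt L * (Real.sqrt m * Real.sqrt (1 + δ) * b) := by
    have h1 : T ≤ |∑ i, w i * mip (A i) (E * P)| := by rw [hTw]; exact le_abs_self _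
    have h2 := hw (E * P) hrkEP
    rw [← hSP] at h2
    have h3 : Real.sqrt SP ≤ Real.sqrt m * Real.sqrt (1 + δ) * b := by
      have : Real.sqrt SP ≤ Real.sqrt ((m : ℝ) * ((1 + δ) * b ^ 2)) :=
        Real.sqrt_le_sqrt hSPle
      rwa [Real.sqrt_mul hm'.le, Real.sqrt_mul (by linarith), Real.sqrt_sq hb0,
        ← mul_assoc] at this
    calc T ≤ |∑ i, w i * mip (A i) (E * P)| := h1
      _ ≤ 2 * σw * Real.sqrt L * Real.sqrt SP := h2
      _ ≤ 2 * σw * Real.sqrt L * (Real.sqrt m * Real.sqrt (1 + δ) * b) := by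
          apply mul_le_mul_of_nonneg_left h3 (by positivity)
  -- final algebra
  set c := 2 * σw * Real.sqrt L * Real.sqrt (1 + δ) with hc
  clear_value c
  have hc0 : 0 ≤ c := by rw [hc]; positivity
  have hcomb : (m : ℝ) * (b ^ 2 - δ * (a * b)) ≤ c * Real.sqrt m * b := by
    calc (m : ℝ) * (b ^ 2 - δ * (a * b)) ≤ T := hT1
      _ ≤ 2 * σw * Real.sqrt L * (Real.sqrt m * Real.sqrt (1 + δ) * b) := hT2
      _ = c * Real.sqrt m * b := by rw [hc]; ring
  have hmb : (m : ℝ) * b ≤ (m : ℝ) * (δ * a) + c * Real.sqrt m := by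
    have h5 : ((m : ℝ) * b) * b ≤ ((m : ℝ) * (δ * a) + c * Real.sqrt m) * b := by
      nlinarith [hcomb]
    exact le_of_mul_le_mul_right h5 hbpos
  have hrhs : 2 * Real.sqrt ((1 + δ) * L / m) * σw = c * Real.sqrt m / m := by
    have h6 : c * Real.sqrt m / m = c / Real.sqrt m := by
      rw [mul_div_assoc, Real.sqrt_div_self', mul_one_div]
    rw [h6, Real.sqrt_div (mul_nonneg (by linarith) hL),
      Real.sqrt_mul (by linarith : (0:ℝ) ≤ 1 + δ), hc]
    ring
  rw [hrhs]
  calc b = ((m : ℝ) * b) / m := (mul_div_cancel_left₀ b hm0).symm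
    _ ≤ ((m : ℝ) * (δ * a) + c * Real.sqrt m) / m := (div_le_div_iff_of_pos_right hm').mpr hmb
    _ = δ * a + c * Real.sqrt m / m := by
        rw [add_div, mul_div_cancel_left₀ _ hm0]
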